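/- (Bounds for Maurey's recursion.) Fix 0 < ε < 1/2 and let φ_n be Maurey's sequence on 𝕋^ℕ. Then for every n ≥ 1 and every w ∈ 𝕋^ℕ one has |φ_n(w)| < 1, and for every n ≥ 2, (1 − ε)(1 − |φ_{n−1}(w)|) ≤ 1 − |φ_n(w)|. -/

import Mathlib

open MeasureTheory Function
open scoped ENNReal NNReal

noncomputable section

instance : Fact (0 < 2 * Real.pi) := ⟨by positivity⟩

/-- The circle `𝕋`, realized as the additive circle `ℝ / 2πℤ`. -/
abbrev Torus : Type := AddCircle (2 * Real.pi)

/-- The normalized Haar probability measure `m` on the circle `𝕋`. -/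
abbrev haarT : Measure Torus := AddCircle.haarAddCircle

/-- The canonical identification of `𝕋` with the unit circle in `ℂ`. -/
noncomputable def toC (ζ : Torus) : ℂ := (AddCircle.toCircle ζ : ℂ)

/-- `H¹₀(𝕋, X)`: Bochner-integrable `X`-valued functions on `𝕋` all of whose Fourier coefficients
`ĥ(n)`, `n ≤ 0`, vanish. -/
def MemH1Zero {X : Type} [NormedAddCommGroup X] [NormedSpace ℂ X] (h : Torus → X) : Prop :=
  Integrable h haarT ∧ ∀ n : ℤ, n ≤ 0 → fourierCoeff h n = 0

/-- The countable torus product `𝕋^ℕ`. -/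
abbrev TorusProd : Type := ℕ → Torus

/-- The normalized Haar probability measure `ℙ` on `𝕋^ℕ` (the product Haar measure). -/
noncomputable def haarTP : Measure TorusProd := MeasureTheory.Measure.addHaarMeasure ⊤

instance : IsProbabilityMeasure haarTP :=
  IsProbabilityMeasure.mk (MeasureTheory.Measure.addHaarMeasure_self (K₀ := ⊤))

/-- The filtration `(ℱ_n)` on `𝕋^ℕ` where `ℱ_n` is generated by the first `n` coordinates. -/
noncomputable def coordFiltration : Filtration ℕ (inferInstance : MeasurableSpace TorusProd) where
  seq n := MeasurableSpace.comap (fun w : TorusProd => fun i : Fin n => w i) inferInstance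
  mono' := by
    intro m n hmn
    have h : (fun w : TorusProd => fun i : Fin m => w i)
        = (fun (x : Fin n → Torus) (i : Fin m) => x (Fin.castLE hmn i))
            ∘ (fun w : TorusProd => fun i : Fin n => w i) := rfl
    simp only []
    rw [h, ← MeasurableSpace.comap_comp]
    exact MeasurableSpace.comap_mono
      ((measurable_pi_lambda _ fun i => measurable_pi_apply _).comap_le)
  le' := fun n => (measurable_pi_lambda _ fun i => measurable_pi_apply _).comap_le

/-- An `X`-valued Hardy martingale on `𝕋^ℕ`: a martingale `F` with respect to the coordinate
filtration with `F 0 = 0` such that for each `k ≥ 1` and almost every `w`, the function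
`y ↦ F_k(w_1, …, w_{k-1}, y) - F_{k-1}(w)` of the `k`-th coordinate belongs to `H¹₀(𝕋, X)`. -/
def IsHardyMartingale {X : Type} [NormedAddCommGroup X] [NormedSpace ℂ X] [CompleteSpace X]
    (F : ℕ → TorusProd → X) : Prop :=
  Martingale F coordFiltration haarTP ∧ F 0 = 0 ∧
  ∀ k : ℕ, 0 < k → ∀ᵐ w ∂haarTP,
    MemH1Zero (fun y : Torus => F k (Function.update w (k - 1) y) - F (k - 1) w)


/-- **Maurey's sequence** `φ_n` on `𝕋^ℕ`, defined recursively by `φ_0 = 0`,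
`φ_{n+1}(w) = φ_n(w) + ε (1 - |φ_n(w)|)² w_{n+1}` (coordinates indexed from `0`,
so that `φ_n` depends on the first `n` coordinates); in particular `φ_1(w) = ε w_1`. -/
noncomputable def maureySeq (ε : ℝ) : ℕ → TorusProd → ℂ
  | 0 => fun _ => 0
  | n + 1 => fun w =>
      maureySeq ε n w + (ε * (1 - ‖maureySeq ε n w‖) ^ 2) • toC (w n)

/-- **Bounds for Maurey's recursion.** For `0 < ε < 1/2`: `|φ_n(w)| < 1` for all `n ≥ 1`, and
`(1 - ε)(1 - |φ_{n-1}(w)|) ≤ 1 - |φ_n(w)|` for all `n ≥ 2`. -/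
theorem maurey_recursion_bounds (ε : ℝ) (hε0 : 0 < ε) (hε : ε < 1 / 2) :
    (∀ n : ℕ, 1 ≤ n → ∀ w : TorusProd, ‖maureySeq ε n w‖ < 1) ∧
    (∀ n : ℕ, 2 ≤ n → ∀ w : TorusProd,
      (1 - ε) * (1 - ‖maureySeq ε (n - 1) w‖)
        ≤ 1 - ‖maureySeq ε n w‖) := by
  have habs : ∀ n w, ‖maureySeq ε n w‖ < 1 := by
    intro n
    induction n with
    | zero => intro w; simp [maureySeq]
    | succ n ih =>
      intro w
      have h := ih w
      set a := ‖maureySeq ε n w‖ with ha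
      have ha0 : 0 ≤ a := norm_nonneg _
      have hstep : ‖maureySeq ε (n + 1) w‖ ≤ a + ε * (1 - a) ^ 2 := by
        calc ‖maureySeq ε (n + 1) w‖
            ≤ a + ‖(ε * (1 - a) ^ 2 : ℝ) • toC (w n)‖ :=
              norm_add_le _ _
          _ = a + ε * (1 - a) ^ 2 := by
              rw [norm_smul,
                show ∀ ζ, ‖toC ζ‖ = 1 from fun ζ => Circle.norm_coe _]
              have : |ε * (1 - a) ^ 2| = ε * (1 - a) ^ 2 := abs_of_nonneg (by positivity)
              rw [Real.norm_eq_abs, this, mul_one]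
      nlinarith [sq_nonneg (1 - a)]
  refine ⟨fun n _ w => habs n w, fun n hn w => ?_⟩
  obtain ⟨m, rfl⟩ : ∃ m, n = m + 1 := ⟨n - 1, (Nat.succ_pred_eq_of_pos (by omega)).symm⟩
  simp only [Nat.add_sub_cancel]
  have h := habs m w
  set a := ‖maureySeq ε m w‖ with ha
  have ha0 : 0 ≤ a := norm_nonneg _
  have hstep : ‖maureySeq ε (m + 1) w‖ ≤ a + ε * (1 - a) ^ 2 := by
    calc ‖maureySeq ε (m + 1) w‖
        ≤ a + ‖(ε * (1 - a) ^ 2 : ℝ) • toC (w m)‖ :=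
          norm_add_le _ _
      _ = a + ε * (1 - a) ^ 2 := by
          rw [norm_smul,
                show ∀ ζ, ‖toC ζ‖ = 1 from fun ζ => Circle.norm_coe _]
          have : |ε * (1 - a) ^ 2| = ε * (1 - a) ^ 2 := abs_of_nonneg (by positivity)
          rw [Real.norm_eq_abs, this, mul_one]
  nlinarith [mul_nonneg (mul_nonneg hε0.le (by linarith : (0:ℝ) ≤ 1 - a)) ha0]

end
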